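/- Let G be a finite group and let a, b : G → ℝ≥0 be nonzero nonnegative functions with ∑_g b(g) = 1 and a * b = a. Then for every function x : G → ℂ, a * (x·b) = (∑_g x(g) b(g)) · a, where (x·b)(g) = x(g) b(g) is the pointwise product. -/
import Mathlib


/-- Convolution of real-valued functions on a finite group. -/
noncomputable def convR {G : Type*} [Group G] [Fintype G] (f h : G → ℝ) : G → ℝ :=
  fun g => ∑ y : G, f y * h (y⁻¹ * g)

/-- Convolution of complex-valued functions on a finite group. -/
noncomputable def convC {G : Type*} [Group G] [Fintype G] (f h : G → ℂ) : G → ℂ :=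
  fun g => ∑ y : G, f y * h (y⁻¹ * g)

theorem absorption_of_pointwise_multiples {G : Type*} [Group G] [Fintype G]
    (a b : G → ℝ) (ha : ∀ g, 0 ≤ a g) (hb : ∀ g, 0 ≤ b g)
    (hane : a ≠ 0) (hbne : b ≠ 0) (hbsum : ∑ g : G, b g = 1)
    (habs : convR a b = a) :
    ∀ x : G → ℂ,
      convC (fun g => (a g : ℂ)) (fun g => x g * (b g : ℂ)) =
        fun g => (∑ y : G, x y * (b y : ℂ)) * (a g : ℂ) := by
  -- reindexed form of the absorption hypothesis
  have habs' : ∀ g : G, ∑ z : G, a (g * z⁻¹) * b z = a g := by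
    intro g
    have h1 : convR a b g = a g := congrFun habs g
    rw [convR] at h1
    rw [← h1]
    exact Fintype.sum_equiv ((Equiv.inv G).trans (Equiv.mulLeft g))
      (fun z => a (g * z⁻¹) * b z) (fun y => a y * b (y⁻¹ * g))
      (by intro z; simp [mul_assoc])
  -- translated L² norm
  have hNz : ∀ z : G, ∑ g : G, a (g * z⁻¹) ^ 2 = ∑ g : G, a g ^ 2 := by
    intro z
    exact Fintype.sum_equiv (Equiv.mulRight z⁻¹) _ _ (fun g => rfl)
  -- total correlation
  have hN : ∑ z : G, b z * ∑ g : G, a g * a (g * z⁻¹) = ∑ g : G, a g ^ 2 := by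
    calc ∑ z : G, b z * ∑ g : G, a g * a (g * z⁻¹)
        = ∑ z : G, ∑ g : G, a g * (a (g * z⁻¹) * b z) := by
          refine Finset.sum_congr rfl fun z _ => ?_
          rw [Finset.mul_sum]
          exact Finset.sum_congr rfl fun g _ => by ring
      _ = ∑ g : G, ∑ z : G, a g * (a (g * z⁻¹) * b z) := Finset.sum_comm
      _ = ∑ g : G, a g * a g := by
          refine Finset.sum_congr rfl fun g _ => ?_
          rw [← Finset.mul_sum, habs' g]
      _ = ∑ g : G, a g ^ 2 := by simp [sq]
  have hexp : ∀ z : G, ∑ g : G, (a g - a (g * z⁻¹)) ^ 2 =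
      2 * (∑ g : G, a g ^ 2) - 2 * ∑ g : G, a g * a (g * z⁻¹) := by
    intro z
    calc ∑ g : G, (a g - a (g * z⁻¹)) ^ 2
        = ∑ g : G, (a g ^ 2 + a (g * z⁻¹) ^ 2 - 2 * (a g * a (g * z⁻¹))) := by
          refine Finset.sum_congr rfl fun g _ => ?_; ring
      _ = ((∑ g : G, a g ^ 2) + ∑ g : G, a (g * z⁻¹) ^ 2)
            - 2 * ∑ g : G, a g * a (g * z⁻¹) := by
          rw [Finset.sum_sub_distrib, Finset.sum_add_distrib, Finset.mul_sum]
      _ = 2 * (∑ g : G, a g ^ 2) - 2 * ∑ g : G, a g * a (g * z⁻¹) := by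
          rw [hNz z]; ring
  have hzero : ∑ z : G, b z * ∑ g : G, (a g - a (g * z⁻¹)) ^ 2 = 0 := by
    calc ∑ z : G, b z * ∑ g : G, (a g - a (g * z⁻¹)) ^ 2
        = ∑ z : G, (b z * (2 * (∑ g : G, a g ^ 2))
            - 2 * (b z * ∑ g : G, a g * a (g * z⁻¹))) := by
          refine Finset.sum_congr rfl fun z _ => ?_
          rw [hexp z]; ring
      _ = (∑ z : G, b z) * (2 * (∑ g : G, a g ^ 2))
            - 2 * ∑ z : G, b z * ∑ g : G, a g * a (g * z⁻¹) := by
          simp only [Finset.sum_sub_distrib, ← Finset.sum_mul, ← Finset.mul_sum]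
      _ = 0 := by rw [hbsum, hN]; ring
  -- key invariance: a is invariant under right translation by supp b
  have key : ∀ z : G, b z ≠ 0 → ∀ g : G, a (g * z⁻¹) = a g := by
    intro z hz g
    have hterm : ∀ w ∈ Finset.univ, (0:ℝ) ≤ b w * ∑ g : G, (a g - a (g * w⁻¹)) ^ 2 := by
      intro w _
      exact mul_nonneg (hb w) (Finset.sum_nonneg fun g _ => sq_nonneg _)
    have hall := (Finset.sum_eq_zero_iff_of_nonneg hterm).mp hzero z (Finset.mem_univ z)
    have hsq : ∑ g : G, (a g - a (g * z⁻¹)) ^ 2 = 0 := by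
      rcases mul_eq_zero.mp hall with h | h
      · exact absurd h hz
      · exact h
    have := (Finset.sum_eq_zero_iff_of_nonneg
      (fun g _ => sq_nonneg (a g - a (g * z⁻¹)))).mp hsq g (Finset.mem_univ g)
    have := pow_eq_zero_iff (n := 2) (by norm_num) |>.mp this
    linarith [sub_eq_zero.mp this]
  -- main computation
  intro x
  funext g
  rw [convC]
  calc ∑ y : G, (a y : ℂ) * (x (y⁻¹ * g) * (b (y⁻¹ * g) : ℂ))
      = ∑ z : G, (a (g * z⁻¹) : ℂ) * (x z * (b z : ℂ)) := by
        refine (Fintype.sum_equiv ((Equiv.inv G).trans (Equiv.mulLeft g))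
          (fun z => (a (g * z⁻¹) : ℂ) * (x z * (b z : ℂ)))
          (fun y => (a y : ℂ) * (x (y⁻¹ * g) * (b (y⁻¹ * g) : ℂ)))
          (by intro z; simp [mul_assoc])).symm
    _ = ∑ z : G, x z * (b z : ℂ) * (a g : ℂ) := by
        refine Finset.sum_congr rfl fun z _ => ?_
        by_cases hz : b z = 0
        · simp [hz]
        · rw [key z hz g]; ring
    _ = (∑ y : G, x y * (b y : ℂ)) * (a g : ℂ) := by rw [Finset.sum_mul]
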